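/- Let P̃₀ ≠ P̃₁ and let Λ be the feasible set of quadruples (π₀, π₁, P₀, P₁) with π₀ + π₁ < 1 satisfying the contamination model. The quantity π₀ + π₁ attains its maximum over Λ uniquely at the mutually irreducible solution (π₀*, π₁*, P₀*, P₁*), and the same quadruple uniquely maximizes ‖P₀ - P₁‖_TV over Λ. -/
import Mathlib


open MeasureTheory

/-- The mixture `(1-a)·P + a·Q` of two measures. -/
noncomputable def mix {X : Type*} [MeasurableSpace X] (a : ℝ) (P Q : Measure X) :
    Measure X :=
  ENNReal.ofReal (1 - a) • P + ENNReal.ofReal a • Q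

/-- `G` is irreducible with respect to `H`: no decomposition `G = γ·H + (1-γ)·F'`
with `F'` a probability measure and `0 < γ ≤ 1`. -/
def Irred {X : Type*} [MeasurableSpace X] (G H : Measure X) : Prop :=
  ¬ ∃ (γ : ℝ) (F' : Measure X), IsProbabilityMeasure F' ∧ 0 < γ ∧ γ ≤ 1 ∧
      G = mix γ F' H

/-- Mutual irreducibility. -/
def MutIrred {X : Type*} [MeasurableSpace X] (P Q : Measure X) : Prop :=
  Irred P Q ∧ Irred Q P

/-- The set of feasible mixture proportions of `H` in `F`. -/
def nuSet {X : Type*} [MeasurableSpace X] (F H : Measure X) : Set ℝ :=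
  {α | α ∈ Set.Icc (0:ℝ) 1 ∧
    ∃ G' : Measure X, IsProbabilityMeasure G' ∧ F = mix α G' H}

/-- `ν*(F,H)`: the maximal proportion of `H` in `F`. -/
noncomputable def nuStar {X : Type*} [MeasurableSpace X] (F H : Measure X) : ℝ :=
  sSup (nuSet F H)

/-- Feasible quadruples `(π₀, π₁, P₀, P₁)` for the contamination model with observed
contaminated distributions `Pt₀, Pt₁`. -/
def Feas {X : Type*} [MeasurableSpace X] (Pt₀ Pt₁ : Measure X)
    (q : ℝ × ℝ × Measure X × Measure X) : Prop :=
  0 ≤ q.1 ∧ 0 ≤ q.2.1 ∧ q.1 + q.2.1 < 1 ∧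
  IsProbabilityMeasure q.2.2.1 ∧ IsProbabilityMeasure q.2.2.2 ∧
  Pt₀ = mix q.1 q.2.2.1 q.2.2.2 ∧ Pt₁ = mix q.2.1 q.2.2.2 q.2.2.1

/-- Total variation distance between two measures. -/
noncomputable def tvDist {X : Type*} [MeasurableSpace X] (P Q : Measure X) : ℝ :=
  ⨆ A : {A : Set X // MeasurableSet A}, |(P A).toReal - (Q A).toReal|

lemma mix_apply {X : Type*} [MeasurableSpace X] (a : ℝ) (P Q : Measure X) (A : Set X) :
    mix a P Q A = ENNReal.ofReal (1 - a) * P A + ENNReal.ofReal a * Q A := by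
  simp [mix]

lemma mix_apply_toReal {X : Type*} [MeasurableSpace X] {a : ℝ} (ha : 0 ≤ a) (ha1 : a ≤ 1)
    (P Q : Measure X) [IsFiniteMeasure P] [IsFiniteMeasure Q] (A : Set X) :
    ((mix a P Q) A).toReal = (1-a) * (P A).toReal + a * (Q A).toReal := by
  rw [mix_apply, ENNReal.toReal_add (by finiteness) (by finiteness), ENNReal.toReal_mul,
    ENNReal.toReal_mul, ENNReal.toReal_ofReal (by linarith), ENNReal.toReal_ofReal ha]

lemma measure_eq_of_forall {X : Type*} [MeasurableSpace X] {P Q : Measure X}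
    [IsFiniteMeasure P] [IsFiniteMeasure Q]
    (h : ∀ A, MeasurableSet A → (P A).toReal = (Q A).toReal) : P = Q := by
  ext A hA
  exact (ENNReal.toReal_eq_toReal_iff' (measure_ne_top _ _) (measure_ne_top _ _)).mp (h A hA)

instance mix_fin {X : Type*} [MeasurableSpace X] (a : ℝ) (P Q : Measure X)
    [IsFiniteMeasure P] [IsFiniteMeasure Q] : IsFiniteMeasure (mix a P Q) := by
  constructor
  rw [mix_apply]
  finiteness

lemma key_ineq {X : Type*} [MeasurableSpace X]
    {Pt₀ Pt₁ P₀ P₁ P₀s P₁s : Measure X}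
    [IsProbabilityMeasure P₀] [IsProbabilityMeasure P₁]
    [IsProbabilityMeasure P₀s] [IsProbabilityMeasure P₁s]
    {π₀ π₁ π₀s π₁s : ℝ}
    (h0 : 0 ≤ π₀) (h1 : 0 ≤ π₁) (hsum : π₀ + π₁ < 1)
    (h0s : 0 ≤ π₀s) (h1s : 0 ≤ π₁s) (hsums : π₀s + π₁s < 1)
    (e1 : Pt₀ = mix π₀ P₀ P₁) (e2 : Pt₁ = mix π₁ P₁ P₀)
    (e3 : Pt₀ = mix π₀s P₀s P₁s) (e4 : Pt₁ = mix π₁s P₁s P₀s)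
    (hirr : Irred P₀s P₁s) :
    π₀ * (1 - π₁s) ≤ π₀s * (1 - π₁) ∧
    (π₀ * (1 - π₁s) = π₀s * (1 - π₁) → P₀s = P₀) := by
  set u : ℝ := (1-π₀s)*(1-π₁) - π₀*π₁s with hu_def
  set v : ℝ := π₀*(1-π₁s) - π₀s*(1-π₁) with hv_def
  have hu : 0 < u := by nlinarith
  have huv : u - v = 1 - π₀ - π₁ := by ring
  -- pointwise relation
  have hpw : ∀ A : Set X, u * (P₀s A).toReal =
      (1-π₀-π₁) * (P₀ A).toReal + v * (P₁s A).toReal := by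
    intro A
    have E3 : ((mix π₀ P₀ P₁ : Measure X) A).toReal = ((mix π₀s P₀s P₁s : Measure X) A).toReal := by
      rw [← e1, ← e3]
    have E4 : ((mix π₁ P₁ P₀ : Measure X) A).toReal = ((mix π₁s P₁s P₀s : Measure X) A).toReal := by
      rw [← e2, ← e4]
    rw [mix_apply_toReal h0 (by linarith), mix_apply_toReal h0s (by linarith)] at E3
    rw [mix_apply_toReal h1 (by linarith), mix_apply_toReal h1s (by linarith)] at E4
    linear_combination π₀ * E4 - (1-π₁) * E3
  constructor
  · by_contra hv
    push_neg at hv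
    have hvpos : 0 < v := by simp only [hv_def]; linarith
    exact hirr ⟨v/u, P₀, inferInstance, div_pos hvpos hu,
      by rw [div_le_one hu]; linarith,
      measure_eq_of_forall fun A hA => by
        rw [mix_apply_toReal (le_of_lt (div_pos hvpos hu)) (by rw [div_le_one hu]; linarith)]
        have hpw' : u * (P₀s A).toReal =
            (u - v) * (P₀ A).toReal + v * (P₁s A).toReal := by
          rw [huv]; exact hpw A
        have hune : u ≠ 0 := ne_of_gt hu
        field_simp
        linear_combination hpw'⟩
  · intro heq
    have hv0 : v = 0 := by simp only [hv_def]; linarith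
    have huw : u = 1 - π₀ - π₁ := by linarith
    refine measure_eq_of_forall fun A hA => ?_
    have := hpw A
    rw [hv0, huw] at this
    have hw : (0:ℝ) < 1 - π₀ - π₁ := by linarith
    have h2 : (1 - π₀ - π₁) * ((P₀s A).toReal - (P₀ A).toReal) = 0 := by
      linear_combination this
    rcases mul_eq_zero.mp h2 with h3 | h3
    · linarith
    · linarith

lemma tv_bdd {X : Type*} [MeasurableSpace X] (P Q : Measure X)
    [IsProbabilityMeasure P] [IsProbabilityMeasure Q] :
    BddAbove (Set.range fun A : {A : Set X // MeasurableSet A} =>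
      |(P A).toReal - (Q A).toReal|) := by
  refine ⟨2, ?_⟩
  rintro x ⟨A, rfl⟩
  have h1 : (P A).toReal ≤ 1 := by
    simpa using (ENNReal.toReal_le_toReal (measure_ne_top _ _) ENNReal.one_ne_top).mpr
      prob_le_one
  have h2 : (Q A).toReal ≤ 1 := by
    simpa using (ENNReal.toReal_le_toReal (measure_ne_top _ _) ENNReal.one_ne_top).mpr
      prob_le_one
  have h3 : 0 ≤ (P A).toReal := ENNReal.toReal_nonneg
  have h4 : 0 ≤ (Q A).toReal := ENNReal.toReal_nonneg
  rw [abs_le]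
  constructor <;> linarith

lemma tv_pos {X : Type*} [MeasurableSpace X] {P Q : Measure X}
    [IsProbabilityMeasure P] [IsProbabilityMeasure Q] (hne : P ≠ Q) :
    0 < tvDist P Q := by
  obtain ⟨A, hA, hAne⟩ : ∃ A, MeasurableSet A ∧ P A ≠ Q A := by
    by_contra h
    push_neg at h
    exact hne (Measure.ext fun A hA => h A hA)
  have htr : (P A).toReal ≠ (Q A).toReal := fun h =>
    hAne ((ENNReal.toReal_eq_toReal_iff' (measure_ne_top _ _) (measure_ne_top _ _)).mp h)
  have : 0 < |(P A).toReal - (Q A).toReal| := abs_pos.mpr (sub_ne_zero.mpr htr)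
  exact lt_of_lt_of_le this (le_ciSup (tv_bdd P Q) ⟨A, hA⟩)

lemma tv_scale {X : Type*} [MeasurableSpace X] {Pt₀ Pt₁ P₀ P₁ : Measure X}
    [IsProbabilityMeasure P₀] [IsProbabilityMeasure P₁]
    {π₀ π₁ : ℝ} (h0 : 0 ≤ π₀) (h1 : 0 ≤ π₁) (hsum : π₀ + π₁ < 1)
    (e1 : Pt₀ = mix π₀ P₀ P₁) (e2 : Pt₁ = mix π₁ P₁ P₀) :
    tvDist Pt₀ Pt₁ = (1 - π₀ - π₁) * tvDist P₀ P₁ := by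
  rw [tvDist, tvDist, Real.mul_iSup_of_nonneg (by linarith)]
  refine iSup_congr fun A => ?_
  rw [e1, e2, mix_apply_toReal h0 (by linarith), mix_apply_toReal h1 (by linarith)]
  have h : (1-π₀) * (P₀ (A:Set X)).toReal + π₀ * (P₁ (A:Set X)).toReal -
      ((1-π₁) * (P₁ (A:Set X)).toReal + π₁ * (P₀ (A:Set X)).toReal) =
      (1 - π₀ - π₁) * ((P₀ (A:Set X)).toReal - (P₁ (A:Set X)).toReal) := by ring
  rw [h, abs_mul, abs_of_nonneg (by linarith : (0:ℝ) ≤ 1 - π₀ - π₁)]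

theorem main_core {X : Type*} [MeasurableSpace X]
    (Pt₀ Pt₁ : Measure X) [IsProbabilityMeasure Pt₀] [IsProbabilityMeasure Pt₁]
    (hne : Pt₀ ≠ Pt₁)
    (π₀s π₁s : ℝ) (P₀s P₁s : Measure X)
    (h0s : 0 ≤ π₀s) (h1s : 0 ≤ π₁s) (hsums : π₀s + π₁s < 1)
    (hP0s : IsProbabilityMeasure P₀s) (hP1s : IsProbabilityMeasure P₁s)
    (he3 : Pt₀ = mix π₀s P₀s P₁s) (he4 : Pt₁ = mix π₁s P₁s P₀s)
    (hirr0 : Irred P₀s P₁s) (hirr1 : Irred P₁s P₀s)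
    (π₀ π₁ : ℝ) (P₀ P₁ : Measure X)
    (h0 : 0 ≤ π₀) (h1 : 0 ≤ π₁) (hsum : π₀ + π₁ < 1)
    (hP0 : IsProbabilityMeasure P₀) (hP1 : IsProbabilityMeasure P₁)
    (he1 : Pt₀ = mix π₀ P₀ P₁) (he2 : Pt₁ = mix π₁ P₁ P₀)
    (hqne : (π₀, π₁, P₀, P₁) ≠ (π₀s, π₁s, P₀s, P₁s)) :
    π₀ + π₁ < π₀s + π₁s ∧ tvDist P₀ P₁ < tvDist P₀s P₁s := by
  have K1 := key_ineq h0 h1 hsum h0s h1s hsums he1 he2 he3 he4 hirr0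
  have K2 := key_ineq h1 h0 (by linarith) h1s h0s (by linarith) he2 he1 he4 he3 hirr1
  have hsumle : π₀ + π₁ ≤ π₀s + π₁s := by nlinarith [K1.1, K2.1]
  have hstrict : π₀ + π₁ < π₀s + π₁s := by
    rcases lt_or_eq_of_le hsumle with h | h
    · exact h
    exfalso
    have heq0 : π₀ * (1 - π₁s) = π₀s * (1 - π₁) := by nlinarith [K1.1, K2.1]
    have heq1 : π₁ * (1 - π₀s) = π₁s * (1 - π₀) := by nlinarith [K1.1, K2.1]
    have hP0eq := K1.2 heq0
    have hP1eq := K2.2 heq1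
    obtain ⟨A, hA, hAne⟩ : ∃ A, MeasurableSet A ∧ Pt₀ A ≠ Pt₁ A := by
      by_contra hcon
      push_neg at hcon
      exact hne (Measure.ext fun A hA => hcon A hA)
    have htr : (Pt₀ A).toReal ≠ (Pt₁ A).toReal := fun hh =>
      hAne ((ENNReal.toReal_eq_toReal_iff' (measure_ne_top _ _) (measure_ne_top _ _)).mp hh)
    have E1 : (Pt₀ A).toReal = (1-π₀) * (P₀ A).toReal + π₀ * (P₁ A).toReal := by
      rw [he1, mix_apply_toReal h0 (by linarith)]
    have E2 : (Pt₁ A).toReal = (1-π₁) * (P₁ A).toReal + π₁ * (P₀ A).toReal := by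
      rw [he2, mix_apply_toReal h1 (by linarith)]
    have E3 : (Pt₀ A).toReal = (1-π₀s) * (P₀ A).toReal + π₀s * (P₁ A).toReal := by
      rw [he3, hP0eq, hP1eq, mix_apply_toReal h0s (by linarith)]
    have E4 : (Pt₁ A).toReal = (1-π₁s) * (P₁ A).toReal + π₁s * (P₀ A).toReal := by
      rw [he4, hP0eq, hP1eq, mix_apply_toReal h1s (by linarith)]
    have hab : (P₀ A).toReal ≠ (P₁ A).toReal := by
      intro hh
      apply htr
      rw [E1, E2, hh]; ring
    have hpi0 : π₀ = π₀s := by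
      have : (π₀ - π₀s) * ((P₁ A).toReal - (P₀ A).toReal) = 0 := by
        linear_combination E3 - E1
      rcases mul_eq_zero.mp this with hh | hh
      · linarith
      · exact absurd (by linarith : (P₀ A).toReal = (P₁ A).toReal) hab
    have hpi1 : π₁ = π₁s := by
      have : (π₁ - π₁s) * ((P₀ A).toReal - (P₁ A).toReal) = 0 := by
        linear_combination E4 - E2
      rcases mul_eq_zero.mp this with hh | hh
      · linarith
      · exact absurd (by linarith : (P₀ A).toReal = (P₁ A).toReal) hab
    exact hqne (by rw [hpi0, hpi1, ← hP0eq, ← hP1eq])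
  refine ⟨hstrict, ?_⟩
  have T1 := tv_scale h0 h1 hsum he1 he2
  have T2 := tv_scale h0s h1s hsums he3 he4
  have hT := tv_pos hne
  have hE : (1-π₀-π₁) * tvDist P₀ P₁ = (1-π₀s-π₁s) * tvDist P₀s P₁s := by
    rw [← T1, ← T2]
  have htv : 0 < tvDist P₀ P₁ := by nlinarith
  nlinarith [mul_pos (show (0:ℝ) < (π₀s+π₁s) - (π₀+π₁) by linarith) htv,
    (show (0:ℝ) < 1-π₀s-π₁s by linarith)]


theorem mutually_irreducible_maximal_denoising {X : Type*} [MeasurableSpace X]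
    (Pt₀ Pt₁ : Measure X) [IsProbabilityMeasure Pt₀] [IsProbabilityMeasure Pt₁]
    (hne : Pt₀ ≠ Pt₁)
    (qs : ℝ × ℝ × Measure X × Measure X)
    (hqs : Feas Pt₀ Pt₁ qs ∧ MutIrred qs.2.2.1 qs.2.2.2) :
    ∀ q : ℝ × ℝ × Measure X × Measure X, Feas Pt₀ Pt₁ q → q ≠ qs →
      q.1 + q.2.1 < qs.1 + qs.2.1 ∧
      tvDist q.2.2.1 q.2.2.2 < tvDist qs.2.2.1 qs.2.2.2 := by
  obtain ⟨hfs, hirr0, hirr1⟩ := hqs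
  obtain ⟨π₀s, π₁s, P₀s, P₁s⟩ := qs
  obtain ⟨h0s, h1s, hsums, hP0s, hP1s, he3, he4⟩ := hfs
  intro q hq hqne
  obtain ⟨π₀, π₁, P₀, P₁⟩ := q
  obtain ⟨h0, h1, hsum, hP0, hP1, he1, he2⟩ := hq
  exact main_core Pt₀ Pt₁ hne π₀s π₁s P₀s P₁s h0s h1s hsums hP0s hP1s he3 he4
    hirr0 hirr1 π₀ π₁ P₀ P₁ h0 h1 hsum hP0 hP1 he1 he2 hqne
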